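/- Let μ ∈ 𝒫⁻ and let k ≥ l ≥ 2 be integers. Then 𝒞_k(μ) ≥ (k(k−1))/(l(l−1)) · 𝒞_l(μ). In particular, for every k ≥ 2, 𝒞_{k+1}(μ) ≥ ((k+1)/(k−1)) · 𝒞_k(μ). -/
import Mathlib


open MeasureTheory Filter Topology OnePoint
open scoped ENNReal NNReal

noncomputable section

/-- Euclidean space ℝ^d. -/
abbrev Ed (d : ℕ) := EuclideanSpace ℝ (Fin d)

/-- The Coulomb cost on (ℝ^d)^k: `c_k(x) = Σ_{i<j} 1/|x_i - x_j|`,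
valued in (0,+∞] with the convention 1/0 = +∞. -/
def coulomb (d k : ℕ) (x : Fin k → Ed d) : ℝ≥0∞ :=
  ∑ i : Fin k, ∑ j : Fin k, if i < j then (edist (x i) (x j))⁻¹ else 0

/-- The partial interaction cost `𝒞_k(μ)` of a subprobability μ: the infimum of
`∫ c_k dP` over nonnegative measures `P` on (ℝ^d)^k whose k marginals all equal μ
(any such P automatically has total mass ‖μ‖). -/
def partC (d k : ℕ) (μ : Measure (Ed d)) : ℝ≥0∞ :=
  ⨅ (P : Measure (Fin k → Ed d)) (_ : ∀ i : Fin k, P.map (fun x => x i) = μ),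
    ∫⁻ x, coulomb d k x ∂P

lemma exists_perm_pair {n : ℕ} {a b c d : Fin n} (hab : a ≠ b) (hcd : c ≠ d) :
    ∃ σ : Equiv.Perm (Fin n), σ a = c ∧ σ b = d := by
  set σ1 := Equiv.swap a c with hσ1
  have hb' : σ1 b ≠ c := by
    intro h
    have h2 : σ1 b = σ1 a := by rw [h, hσ1, Equiv.swap_apply_left]
    exact hab (σ1.injective h2).symm
  refine ⟨σ1.trans (Equiv.swap (σ1 b) d), ?_, ?_⟩
  · simp only [Equiv.trans_apply]
    rw [hσ1, Equiv.swap_apply_left]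
    exact Equiv.swap_apply_of_ne_of_ne hb'.symm hcd
  · simp only [Equiv.trans_apply]
    exact Equiv.swap_apply_left _ _

lemma sum_perm_pair {n : ℕ} (g : Fin n → Fin n → ℝ≥0∞) {a b c d : Fin n}
    (hab : a ≠ b) (hcd : c ≠ d) :
    ∑ π : Equiv.Perm (Fin n), g (π a) (π b) = ∑ π : Equiv.Perm (Fin n), g (π c) (π d) := by
  obtain ⟨σ, hσa, hσb⟩ := exists_perm_pair hab hcd
  have h := Equiv.sum_comp (Equiv.mulRight σ) (fun π : Equiv.Perm (Fin n) => g (π a) (π b))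
  simp only [Equiv.coe_mulRight, Equiv.Perm.mul_apply, hσa, hσb] at h
  exact h.symm

lemma sum_ite_ne_const {n : ℕ} (S : ℝ≥0∞) :
    ∑ a : Fin n, ∑ b : Fin n, (if a ≠ b then S else 0) = ((n * (n - 1) : ℕ) : ℝ≥0∞) * S := by
  have h : ∀ a : Fin n, ∑ b : Fin n, (if a ≠ b then S else 0) = ((n - 1 : ℕ) : ℝ≥0∞) * S := by
    intro a
    rw [← Finset.sum_filter, Finset.filter_ne, Finset.sum_const,
      Finset.card_erase_of_mem (Finset.mem_univ a), Finset.card_univ, Fintype.card_fin,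
      nsmul_eq_mul]
  simp_rw [h]
  rw [Finset.sum_const, Finset.card_univ, Fintype.card_fin, nsmul_eq_mul, Nat.cast_mul, mul_assoc]

lemma sum_ite_ne_eq_two_mul {n : ℕ} (g : Fin n → Fin n → ℝ≥0∞) (hg : ∀ i j, g i j = g j i) :
    ∑ i : Fin n, ∑ j : Fin n, (if i ≠ j then g i j else 0)
      = 2 * ∑ i : Fin n, ∑ j : Fin n, (if i < j then g i j else 0) := by
  have h : ∀ i j : Fin n, (if i ≠ j then g i j else 0)
      = (if i < j then g i j else 0) + (if j < i then g i j else 0) := by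
    intro i j
    rcases lt_trichotomy i j with h | h | h
    · simp [h, h.ne, not_lt_of_gt h]
    · simp [h, lt_irrefl]
    · simp [h, h.ne', not_lt_of_gt h]
  simp_rw [h, Finset.sum_add_distrib]
  rw [two_mul]
  congr 1
  rw [Finset.sum_comm]
  refine Finset.sum_congr rfl fun a _ => Finset.sum_congr rfl fun b _ => ?_
  rw [hg b a]

lemma pointwise_key (d k l : ℕ) (hl : 2 ≤ l) (hkl : l ≤ k) (x : Fin k → Ed d) :
    ((k * (k - 1) : ℕ) : ℝ≥0∞) * ∑ π : Equiv.Perm (Fin k),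
        coulomb d l (fun i => x (π (Fin.castLE hkl i)))
      = ((l * (l - 1) : ℕ) : ℝ≥0∞) * ((k).factorial : ℝ≥0∞) * coulomb d k x := by
  set g : Fin k → Fin k → ℝ≥0∞ := fun a b => (edist (x a) (x b))⁻¹ with hgdef
  have hgsymm : ∀ a b, g a b = g b a := fun a b => by simp [hgdef, edist_comm]
  set emb : Fin l → Fin k := Fin.castLE hkl with hemb
  have hembinj : Function.Injective emb := fun i j h => by
    have := congrArg Fin.val h
    simpa [hemb, Fin.ext_iff] using this
  have h01 : (⟨0, by omega⟩ : Fin l) ≠ ⟨1, by omega⟩ := by simp [Fin.ext_iff]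
  set a₀ : Fin k := emb ⟨0, by omega⟩
  set b₀ : Fin k := emb ⟨1, by omega⟩
  have hab₀ : a₀ ≠ b₀ := fun h => h01 (hembinj h)
  set S₀ : ℝ≥0∞ := ∑ π : Equiv.Perm (Fin k), g (π a₀) (π b₀) with hS₀
  -- Claim 1
  have claim1 : 2 * ∑ π : Equiv.Perm (Fin k), coulomb d l (fun i => x (π (emb i)))
      = ((l * (l - 1) : ℕ) : ℝ≥0∞) * S₀ := by
    rw [Finset.mul_sum]
    have hterm : ∀ π : Equiv.Perm (Fin k),
        2 * coulomb d l (fun i => x (π (emb i)))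
          = ∑ i : Fin l, ∑ j : Fin l, (if i ≠ j then g (π (emb i)) (π (emb j)) else 0) := by
      intro π
      rw [sum_ite_ne_eq_two_mul (fun i j => g (π (emb i)) (π (emb j)))
        (fun i j => hgsymm _ _)]
      rfl
    simp_rw [hterm]
    rw [Finset.sum_comm]
    have : ∀ i : Fin l, ∑ π : Equiv.Perm (Fin k),
        ∑ j : Fin l, (if i ≠ j then g (π (emb i)) (π (emb j)) else 0)
        = ∑ j : Fin l, (if i ≠ j then S₀ else 0) := by
      intro i
      rw [Finset.sum_comm]
      refine Finset.sum_congr rfl fun j _ => ?_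
      by_cases hij : i ≠ j
      · simp only [if_pos hij]
        exact sum_perm_pair g (fun h => hij (hembinj h)) hab₀
      · simp [hij]
    simp_rw [this]
    exact sum_ite_ne_const S₀
  -- Claim 2
  have claim2 : ((k * (k - 1) : ℕ) : ℝ≥0∞) * S₀
      = ((k).factorial : ℝ≥0∞) * (2 * coulomb d k x) := by
    rw [← sum_ite_ne_const S₀]
    have h1 : ∀ a b : Fin k, (if a ≠ b then S₀ else 0)
        = ∑ π : Equiv.Perm (Fin k), (if a ≠ b then g (π a) (π b) else 0) := by
      intro a b
      by_cases hab : a ≠ b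
      · simp only [if_pos hab]
        exact sum_perm_pair g hab₀ hab
      · simp [hab]
    simp_rw [h1]
    have swap1 : ∀ a : Fin k, ∑ b : Fin k, ∑ π : Equiv.Perm (Fin k),
        (if a ≠ b then g (π a) (π b) else 0)
        = ∑ π : Equiv.Perm (Fin k), ∑ b : Fin k, (if a ≠ b then g (π a) (π b) else 0) :=
      fun a => Finset.sum_comm
    simp_rw [swap1]
    rw [Finset.sum_comm]
    have h3 : ∀ π : Equiv.Perm (Fin k),
        ∑ a : Fin k, ∑ b : Fin k, (if a ≠ b then g (π a) (π b) else 0)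
          = 2 * coulomb d k x := by
      intro π
      have e1 : ∀ a b : Fin k, (if a ≠ b then g (π a) (π b) else 0)
          = (if π a ≠ π b then g (π a) (π b) else 0) := by
        intro a b
        refine if_congr ?_ rfl rfl
        simp [EmbeddingLike.apply_eq_iff_eq]
      simp_rw [e1]
      have e2 : ∀ a : Fin k, ∑ b : Fin k, (if π a ≠ π b then g (π a) (π b) else 0)
          = ∑ b : Fin k, (if π a ≠ b then g (π a) b else 0) :=
        fun a => Equiv.sum_comp (π : Fin k ≃ Fin k) (fun b => if π a ≠ b then g (π a) b else 0)
      simp_rw [e2]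
      rw [Equiv.sum_comp (π : Fin k ≃ Fin k)
        (fun a => ∑ b : Fin k, (if a ≠ b then g a b else 0))]
      rw [sum_ite_ne_eq_two_mul g hgsymm]
      rfl
    simp_rw [h3]
    rw [Finset.sum_const, Finset.card_univ, Fintype.card_perm, Fintype.card_fin, nsmul_eq_mul]
  -- final assembly
  have cancel : ∀ u v : ℝ≥0∞, 2 * u = 2 * v → u = v := fun u v h =>
    le_antisymm ((ENNReal.mul_le_mul_iff_right (by norm_num) (by norm_num)).mp h.le)
      ((ENNReal.mul_le_mul_iff_right (a := 2) (by norm_num) (by norm_num)).mp h.ge)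
  apply cancel
  calc 2 * (((k * (k - 1) : ℕ) : ℝ≥0∞) * ∑ π : Equiv.Perm (Fin k),
          coulomb d l (fun i => x (π (emb i))))
      = ((k * (k - 1) : ℕ) : ℝ≥0∞) * (2 * ∑ π : Equiv.Perm (Fin k),
          coulomb d l (fun i => x (π (emb i)))) := by ring
    _ = ((k * (k - 1) : ℕ) : ℝ≥0∞) * (((l * (l - 1) : ℕ) : ℝ≥0∞) * S₀) := by rw [claim1]
    _ = ((l * (l - 1) : ℕ) : ℝ≥0∞) * (((k * (k - 1) : ℕ) : ℝ≥0∞) * S₀) := by ring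
    _ = ((l * (l - 1) : ℕ) : ℝ≥0∞) * (((k).factorial : ℝ≥0∞) * (2 * coulomb d k x)) := by
        rw [claim2]
    _ = 2 * (((l * (l - 1) : ℕ) : ℝ≥0∞) * ((k).factorial : ℝ≥0∞) * coulomb d k x) := by ring

lemma measurable_coulomb (d n : ℕ) : Measurable (coulomb d n) := by
  unfold coulomb
  refine Finset.measurable_sum _ fun i _ => Finset.measurable_sum _ fun j _ => ?_
  by_cases h : i < j
  · simp only [if_pos h]
    exact ((measurable_pi_apply i).edist (measurable_pi_apply j)).inv
  · simp only [if_neg h]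
    exact measurable_const

lemma key (d k l : ℕ) (μ : Measure (Ed d)) (hl : 2 ≤ l) (hkl : l ≤ k) :
    (((k * (k - 1) : ℕ) : ℝ≥0∞) / ((l * (l - 1) : ℕ) : ℝ≥0∞)) * partC d l μ ≤ partC d k μ := by
  have hB0 : ((l * (l - 1) : ℕ) : ℝ≥0∞) ≠ 0 := by
    simp only [ne_eq, Nat.cast_eq_zero]
    intro h
    rcases Nat.mul_eq_zero.mp h with h | h <;> omega
  have hBt : ((l * (l - 1) : ℕ) : ℝ≥0∞) ≠ ⊤ := ENNReal.natCast_ne_top _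
  rw [partC]
  refine le_iInf fun P => le_iInf fun hP => ?_
  -- main estimate : A * partC d l μ ≤ B * ∫ c_k dP
  set T : Equiv.Perm (Fin k) → (Fin k → Ed d) → (Fin l → Ed d) :=
    fun π x i => x (π (Fin.castLE hkl i)) with hT
  have hTm : ∀ π, Measurable (T π) :=
    fun π => measurable_pi_lambda _ (fun i => measurable_pi_apply _)
  have hle : ∀ π : Equiv.Perm (Fin k),
      partC d l μ ≤ ∫⁻ x, coulomb d l (T π x) ∂P := by
    intro π
    have hmarg : ∀ i : Fin l, (P.map (T π)).map (fun y => y i) = μ := by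
      intro i
      rw [Measure.map_map (measurable_pi_apply i) (hTm π)]
      exact hP _
    have h1 : partC d l μ ≤ ∫⁻ y, coulomb d l y ∂(P.map (T π)) :=
      iInf_le_of_le (P.map (T π)) (iInf_le_of_le hmarg le_rfl)
    rwa [lintegral_map (measurable_coulomb d l) (hTm π)] at h1
  have hsum : ((k).factorial : ℝ≥0∞) * partC d l μ
      ≤ ∑ π : Equiv.Perm (Fin k), ∫⁻ x, coulomb d l (T π x) ∂P := by
    have : ∑ π : Equiv.Perm (Fin k), partC d l μ = ((k).factorial : ℝ≥0∞) * partC d l μ := by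
      rw [Finset.sum_const, Finset.card_univ, Fintype.card_perm, Fintype.card_fin, nsmul_eq_mul]
    rw [← this]
    exact Finset.sum_le_sum fun π _ => hle π
  have heq : ∑ π : Equiv.Perm (Fin k), ∫⁻ x, coulomb d l (T π x) ∂P
      = ∫⁻ x, ∑ π : Equiv.Perm (Fin k), coulomb d l (T π x) ∂P :=
    (lintegral_finset_sum _ fun π _ => (measurable_coulomb d l).comp (hTm π)).symm
  have hmain : ((k * (k - 1) : ℕ) : ℝ≥0∞) * partC d l μ
      ≤ ((l * (l - 1) : ℕ) : ℝ≥0∞) * ∫⁻ x, coulomb d k x ∂P := by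
    have step1 : ((k).factorial : ℝ≥0∞) * (((k * (k - 1) : ℕ) : ℝ≥0∞) * partC d l μ)
        ≤ ((k).factorial : ℝ≥0∞) * (((l * (l - 1) : ℕ) : ℝ≥0∞) * ∫⁻ x, coulomb d k x ∂P) := by
      calc ((k).factorial : ℝ≥0∞) * (((k * (k - 1) : ℕ) : ℝ≥0∞) * partC d l μ)
          = ((k * (k - 1) : ℕ) : ℝ≥0∞) * (((k).factorial : ℝ≥0∞) * partC d l μ) := by ring
        _ ≤ ((k * (k - 1) : ℕ) : ℝ≥0∞)
            * ∫⁻ x, ∑ π : Equiv.Perm (Fin k), coulomb d l (T π x) ∂P := by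
            exact mul_le_mul_right (hsum.trans heq.le) _
        _ = ∫⁻ x, ((k * (k - 1) : ℕ) : ℝ≥0∞)
            * ∑ π : Equiv.Perm (Fin k), coulomb d l (T π x) ∂P := by
            have hmeasSum : Measurable fun x : Fin k → Ed d =>
                ∑ π : Equiv.Perm (Fin k), coulomb d l (T π x) := by
              refine Finset.measurable_sum _ fun π _ => ?_
              exact (measurable_coulomb d l).comp (hTm π)
            exact (lintegral_const_mul _ hmeasSum).symm
        _ = ∫⁻ x, ((l * (l - 1) : ℕ) : ℝ≥0∞) * ((k).factorial : ℝ≥0∞) * coulomb d k x ∂P := by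
            refine lintegral_congr fun x => ?_
            exact pointwise_key d k l hl hkl x
        _ = ((k).factorial : ℝ≥0∞) * (((l * (l - 1) : ℕ) : ℝ≥0∞) * ∫⁻ x, coulomb d k x ∂P) := by
            rw [lintegral_const_mul _ (measurable_coulomb d k)]
            ring
    exact (ENNReal.mul_le_mul_iff_right (by exact_mod_cast (Nat.factorial_pos k).ne')
      (ENNReal.natCast_ne_top _)).mp step1
  calc ((k * (k - 1) : ℕ) : ℝ≥0∞) / ((l * (l - 1) : ℕ) : ℝ≥0∞) * partC d l μ
      = ((k * (k - 1) : ℕ) : ℝ≥0∞) * partC d l μ / ((l * (l - 1) : ℕ) : ℝ≥0∞) := by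
        rw [div_eq_mul_inv, mul_right_comm, ← div_eq_mul_inv]
    _ ≤ ((l * (l - 1) : ℕ) : ℝ≥0∞) * (∫⁻ x, coulomb d k x ∂P)
        / ((l * (l - 1) : ℕ) : ℝ≥0∞) := ENNReal.div_le_div_right hmain _
    _ = ∫⁻ x, coulomb d k x ∂P := by
        rw [mul_comm, mul_div_assoc, ENNReal.div_self hB0 hBt, mul_one]

/-- **monotonicity of the partial costs.** For μ ∈ 𝒫⁻ and k ≥ l ≥ 2,
`𝒞_k(μ) ≥ (k(k-1))/(l(l-1)) 𝒞_l(μ)`; in particular `𝒞_{m+1}(μ) ≥ ((m+1)/(m-1)) 𝒞_m(μ)`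
for every m ≥ 2. -/
theorem partC_monotone (d : ℕ) (hd : 1 ≤ d) (μ : Measure (Ed d)) (hμ : μ Set.univ ≤ 1)
    (k l : ℕ) (hl : 2 ≤ l) (hkl : l ≤ k) :
    (((k * (k - 1) : ℕ) : ℝ≥0∞) / ((l * (l - 1) : ℕ) : ℝ≥0∞)) * partC d l μ ≤ partC d k μ ∧
    ∀ m : ℕ, 2 ≤ m →
      (((m + 1 : ℕ) : ℝ≥0∞) / ((m - 1 : ℕ) : ℝ≥0∞)) * partC d m μ ≤ partC d (m + 1) μ := by
  refine ⟨key d k l μ hl hkl, ?_⟩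
  intro m hm
  have h := key d (m + 1) m μ hm (Nat.le_succ m)
  have hco : (((m + 1) * ((m + 1) - 1) : ℕ) : ℝ≥0∞) / ((m * (m - 1) : ℕ) : ℝ≥0∞)
      = ((m + 1 : ℕ) : ℝ≥0∞) / ((m - 1 : ℕ) : ℝ≥0∞) := by
    have h1 : (m + 1) - 1 = m := rfl
    rw [h1, Nat.cast_mul, Nat.cast_mul, mul_comm ((m + 1 : ℕ) : ℝ≥0∞)]
    exact ENNReal.mul_div_mul_left _ _
      (by exact_mod_cast (by omega : m ≠ 0)) (ENNReal.natCast_ne_top m)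
  rwa [hco] at h

end
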